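/- Let n = 2k with k ≥ 6, and let S1 = {1, 2, 2k−2, 2k−1} and S2 = {k−2, k−1, k+1, k+2}. Then the circulant graphs G(ℤ_n, S1) and G(ℤ_n, S2) have different inertias; in particular, the adjacency matrices of G(ℤ_n, S1) and G(ℤ_n, S2) have different numbers of positive eigenvalues (counted with multiplicity). -/

import Mathlib

set_option linter.unusedSectionVars false
set_option maxHeartbeats 1000000
set_option maxRecDepth 8000

open Polynomial Finset

/-- Adjacency matrix (over ℝ) of the circulant graph `G(ℤ_n, S)`. -/
noncomputable def circAdj (n : ℕ) (S : Finset (ZMod n)) : Matrix (ZMod n) (ZMod n) ℝ :=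
  fun i j => if j - i ∈ S then 1 else 0

/-- Multiset of eigenvalues (with multiplicity) of the circulant graph `G(ℤ_n, S)`. -/
noncomputable def circSpectrum (n : ℕ) [NeZero n] (S : Finset (ZMod n)) : Multiset ℝ :=
  (Matrix.charpoly (circAdj n S)).roots

noncomputable section CircGeneral

variable (n : ℕ) [NeZero n]

/-- exp(2πi m/n) -/
def cex (m : ℕ) : ℂ := Complex.exp ((2 * Real.pi * m / n : ℝ) * Complex.I)

def zch (x : ZMod n) : ℂ := cex n x.val

lemma cex_add (a b : ℕ) : cex n (a + b) = cex n a * cex n b := by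
  rw [cex, cex, cex, ← Complex.exp_add]
  congr 1
  push_cast
  ring

lemma cex_self : cex n n = 1 := by
  have hn : (n : ℝ) ≠ 0 := Nat.cast_ne_zero.2 (NeZero.ne n)
  rw [cex, show ((2 * Real.pi * n / n : ℝ) : ℂ) * Complex.I = 2 * Real.pi * Complex.I by
    push_cast; field_simp; exact div_self (by exact_mod_cast NeZero.ne n)]
  exact Complex.exp_two_pi_mul_I

lemma cex_nmul_add (q r : ℕ) : cex n (n * q + r) = cex n r := by
  induction q with
  | zero => simp
  | succ q ih =>
    have : n * (q + 1) + r = n + (n * q + r) := by ring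
    rw [this, cex_add, cex_self, ih, one_mul]

lemma cex_mod (a : ℕ) : cex n (a % n) = cex n a := by
  conv_rhs => rw [← Nat.div_add_mod a n]
  rw [cex_nmul_add]

lemma zch_add (x y : ZMod n) : zch n (x + y) = zch n x * zch n y := by
  rw [zch, zch, zch, ZMod.val_add, cex_mod, cex_add]

lemma zch_zero : zch n 0 = 1 := by
  simp [zch, cex]

lemma zch_mul_neg (x : ZMod n) : zch n x * zch n (-x) = 1 := by
  rw [← zch_add, add_neg_cancel, zch_zero]

lemma zch_ne_zero (x : ZMod n) : zch n x ≠ 0 := Complex.exp_ne_zero _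

lemma zch_neg (x : ZMod n) : zch n (-x) = (starRingEnd ℂ) (zch n x) := by
  have h1 : zch n x * zch n (-x) = 1 := zch_mul_neg n x
  have h2 : zch n x * (starRingEnd ℂ) (zch n x) = 1 := by
    rw [Complex.mul_conj]
    norm_cast
    rw [zch, cex, Complex.normSq_eq_norm_sq, Complex.norm_exp_ofReal_mul_I]
    norm_num
  exact mul_left_cancel₀ (zch_ne_zero n x) (h1.trans h2.symm)

lemma zch_add_neg (x : ZMod n) :
    zch n x + zch n (-x) = ((2 * Real.cos (2 * Real.pi * x.val / n) : ℝ) : ℂ) := by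
  rw [zch_neg, Complex.add_conj, zch, cex, Complex.exp_ofReal_mul_I_re]

lemma zch_ne_one {x : ZMod n} (hx : x ≠ 0) : zch n x ≠ 1 := by
  intro h
  rw [zch, cex, Complex.exp_eq_one_iff] at h
  obtain ⟨m, hm⟩ := h
  have hI : ((2 * Real.pi * x.val / n : ℝ) : ℂ) * Complex.I
      = ((m * (2 * Real.pi) : ℝ) : ℂ) * Complex.I := by
    rw [hm]; push_cast; ring
  have hre : (2 * Real.pi * x.val / n : ℝ) = m * (2 * Real.pi) := by
    exact_mod_cast mul_right_cancel₀ Complex.I_ne_zero hI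
  have hn : (0 : ℝ) < n := by
    exact_mod_cast Nat.pos_of_ne_zero (NeZero.ne n)
  have hval : 0 < x.val := Nat.pos_of_ne_zero (fun h0 => hx ((ZMod.val_eq_zero x).mp h0))
  have hvn : (x.val : ℝ) < n := by exact_mod_cast ZMod.val_lt x
  have hv0 : (0:ℝ) < x.val := by exact_mod_cast hval
  have hpi := Real.pi_pos
  have h2 : 2 * Real.pi * (x.val : ℝ) = 2 * Real.pi * ((m : ℝ) * n) := by
    rw [div_eq_iff hn.ne'] at hre; linear_combination hre
  have h3 : (x.val : ℝ) = (m : ℝ) * n :=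
    mul_left_cancel₀ (by positivity : (2 * Real.pi : ℝ) ≠ 0) h2
  have hm0 : (0:ℝ) < (m:ℝ) := by
    by_contra hle
    push_neg at hle
    nlinarith
  have hm1 : (1:ℝ) ≤ (m:ℝ) := by
    exact_mod_cast (by exact_mod_cast hm0 : (0:ℤ) < m)
  nlinarith

lemma sum_zch (c : ZMod n) (hc : c ≠ 0) : ∑ x : ZMod n, zch n (c * x) = 0 := by
  have key : (∑ x : ZMod n, zch n (c * x)) * zch n c = ∑ x : ZMod n, zch n (c * x) := by
    rw [Finset.sum_mul]
    calc ∑ x : ZMod n, zch n (c * x) * zch n c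
        = ∑ x : ZMod n, zch n (c * (x + 1)) := by
          refine Finset.sum_congr rfl fun x _ => ?_
          rw [← zch_add]; ring_nf
      _ = ∑ x : ZMod n, zch n (c * x) :=
          Fintype.sum_equiv (Equiv.addRight (1 : ZMod n)) _ _ (fun x => rfl)
  have h0 : (∑ x : ZMod n, zch n (c * x)) * (zch n c - 1) = 0 := by
    rw [mul_sub, key, mul_one, sub_self]
  rcases mul_eq_zero.mp h0 with h | h
  · exact h
  · exact absurd (sub_eq_zero.mp h) (zch_ne_one n hc)


def Wm : Matrix (ZMod n) (ZMod n) ℂ := Matrix.of fun j i => zch n (j * i)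

def Wm' : Matrix (ZMod n) (ZMod n) ℂ := Matrix.of fun j i => zch n (-(j * i))

def AcM (S : Finset (ZMod n)) : Matrix (ZMod n) (ZMod n) ℂ :=
  Matrix.of fun i j => if j - i ∈ S then 1 else 0

def muC (S : Finset (ZMod n)) (j : ZMod n) : ℂ := ∑ s ∈ S, zch n (-(j * s))

lemma W_mul_Ac (S : Finset (ZMod n)) :
    Wm n * AcM n S = Matrix.diagonal (muC n S) * Wm n := by
  ext j i
  rw [Matrix.mul_apply, Matrix.diagonal_mul]
  have h1 : ∀ x, Wm n j x * AcM n S x i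
      = if i - x ∈ S then zch n (j * x) else 0 := by
    intro x
    simp only [Wm, AcM, Matrix.of_apply]
    split <;> simp
  simp only [h1]
  calc ∑ x : ZMod n, (if i - x ∈ S then zch n (j * x) else 0)
      = ∑ y : ZMod n, (if i - (i - y) ∈ S then zch n (j * (i - y)) else 0) :=
        (Fintype.sum_equiv (Equiv.subLeft i) _ _ (fun x => rfl)).symm
    _ = ∑ y : ZMod n, (if y ∈ S then zch n (j * (i - y)) else 0) := by
        refine Finset.sum_congr rfl fun y _ => ?_
        rw [sub_sub_cancel]
    _ = ∑ y ∈ S, zch n (j * (i - y)) := by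
        rw [Finset.sum_ite_mem, Finset.univ_inter]
    _ = ∑ y ∈ S, zch n (j * i) * zch n (-(j * y)) := by
        refine Finset.sum_congr rfl fun y _ => ?_
        rw [← zch_add]
        ring_nf
    _ = muC n S j * Wm n j i := by
        rw [← Finset.mul_sum, muC]
        show _ = (∑ s ∈ S, zch n (-(j * s))) * zch n (j * i)
        ring


lemma W_mul_W' : Wm n * Wm' n = (n : ℂ) • 1 := by
  ext a b
  rw [Matrix.mul_apply]
  have h1 : ∀ x, Wm n a x * Wm' n x b = zch n ((a - b) * x) := by
    intro x
    simp only [Wm, Wm', Matrix.of_apply]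
    rw [← zch_add]
    ring_nf
  simp only [h1]
  by_cases hab : a = b
  · subst hab
    simp [zch_zero, Matrix.one_apply, ZMod.card]
  · rw [sum_zch n _ (sub_ne_zero.mpr hab)]
    simp [Matrix.one_apply, hab]

lemma det_W_ne_zero : (Wm n).det ≠ 0 := by
  intro h
  have h2 := congrArg Matrix.det (W_mul_W' n)
  rw [Matrix.det_mul, h, zero_mul] at h2
  have h3 : ((n : ℂ) • (1 : Matrix (ZMod n) (ZMod n) ℂ)).det = (n : ℂ) ^ (Fintype.card (ZMod n)) := by
    rw [Matrix.det_smul, Matrix.det_one, mul_one]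
  rw [h3] at h2
  have : (n : ℂ) ≠ 0 := Nat.cast_ne_zero.mpr (NeZero.ne n)
  exact (pow_ne_zero _ this) h2.symm

lemma charpoly_AcM (S : Finset (ZMod n)) :
    (AcM n S).charpoly = ∏ j : ZMod n, (X - C (muC n S j)) := by
  have hconj : (Wm n).map C * Matrix.charmatrix (AcM n S)
      = Matrix.charmatrix (Matrix.diagonal (muC n S)) * (Wm n).map C := by
    rw [Matrix.charmatrix, Matrix.charmatrix]
    have hsc : ∀ M : Matrix (ZMod n) (ZMod n) ℂ[X],
        M * Matrix.scalar (ZMod n) (X : ℂ[X]) = Matrix.scalar (ZMod n) (X : ℂ[X]) * M :=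
      fun M => ((Matrix.scalar_commute (X : ℂ[X]) (fun r => mul_comm _ _) M)).symm
    rw [mul_sub, sub_mul]
    congr 1
    · exact hsc _
    · rw [RingHom.mapMatrix_apply, RingHom.mapMatrix_apply, ← Matrix.map_mul, ← Matrix.map_mul,
        W_mul_Ac]
  have hdet := congrArg Matrix.det hconj
  rw [Matrix.det_mul, Matrix.det_mul] at hdet
  have hC : ((Wm n).map C).det = C ((Wm n).det) := ((C : ℂ →+* ℂ[X]).map_det _).symm
  rw [hC] at hdet
  have hcan : (AcM n S).charpoly = (Matrix.diagonal (muC n S)).charpoly := by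
    have := mul_comm (C ((Wm n).det)) ((Matrix.charmatrix (Matrix.diagonal (muC n S))).det)
    apply mul_left_cancel₀ (a := C ((Wm n).det))
    · simpa using det_W_ne_zero n
    · rw [Matrix.charpoly, Matrix.charpoly, hdet, this]
  rw [hcan, Matrix.charpoly]
  have hdiag : Matrix.charmatrix (Matrix.diagonal (muC n S))
      = Matrix.diagonal (fun j => (X : ℂ[X]) - C (muC n S j)) := by
    refine Matrix.ext fun i j => ?_
    by_cases hij : i = j
    · subst hij
      simp [Matrix.charmatrix_apply_eq]
    · rw [Matrix.charmatrix_apply_ne _ _ _ hij, Matrix.diagonal_apply_ne _ hij,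
        Matrix.diagonal_apply_ne _ hij, map_zero, neg_zero]
  rw [hdiag, Matrix.det_diagonal]


lemma charpoly_circAdj (S : Finset (ZMod n)) (r : ZMod n → ℝ)
    (hr : ∀ j, muC n S j = ((r j : ℝ) : ℂ)) :
    (circAdj n S).charpoly = ∏ j : ZMod n, (X - C (r j)) := by
  apply Polynomial.map_injective (Complex.ofRealHom) Complex.ofReal_injective
  have hmap : (circAdj n S).map Complex.ofRealHom = AcM n S := by
    refine Matrix.ext fun i j => ?_
    simp only [circAdj, AcM, Matrix.map_apply, Matrix.of_apply, apply_ite]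
    split <;> simp
  rw [← Matrix.charpoly_map, hmap, charpoly_AcM, Polynomial.map_prod]
  refine Finset.prod_congr rfl fun j _ => ?_
  rw [Polynomial.map_sub, Polynomial.map_X, Polynomial.map_C, hr j]
  rfl

lemma circSpectrum_eq (S : Finset (ZMod n)) (r : ZMod n → ℝ)
    (hr : ∀ j, muC n S j = ((r j : ℝ) : ℂ)) :
    circSpectrum n S = Multiset.map r Finset.univ.val := by
  rw [circSpectrum, charpoly_circAdj n S r hr, Finset.prod_eq_multiset_prod]
  have : Multiset.map (fun j => X - C (r j)) Finset.univ.val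
      = (Multiset.map r Finset.univ.val).map (fun a => X - C a) := by
    rw [Multiset.map_map]
    rfl
  rw [this, Polynomial.roots_multiset_prod_X_sub_C]

lemma card_filter_spectrum (S : Finset (ZMod n)) (r : ZMod n → ℝ)
    (hr : ∀ j, muC n S j = ((r j : ℝ) : ℂ)) (p : ℝ → Prop) [DecidablePred p] :
    Multiset.card (Multiset.filter p (circSpectrum n S))
      = (Finset.univ.filter (fun j => p (r j))).card := by
  rw [circSpectrum_eq n S r hr, Multiset.filter_map, Multiset.card_map]
  rfl

lemma muC_pair (S : Finset (ZMod n)) (a b : ZMod n) (hS : S = {a, b, -b, -a})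
    (h1 : a ≠ b) (h2 : a ≠ -b) (h3 : a ≠ -a) (h4 : b ≠ -b) (j : ZMod n) :
    muC n S j = ((2 * Real.cos (2 * Real.pi * (j * a).val / n)
      + 2 * Real.cos (2 * Real.pi * (j * b).val / n) : ℝ) : ℂ) := by
  subst hS
  have hba : b ≠ -a := fun h => h2 (by rw [h, neg_neg])
  rw [muC, Finset.sum_insert (by
        simp only [Finset.mem_insert, Finset.mem_singleton]
        push_neg
        exact ⟨h1, h2, h3⟩),
      Finset.sum_insert (by
        simp only [Finset.mem_insert, Finset.mem_singleton]
        push_neg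
        exact ⟨h4, hba⟩),
      Finset.sum_insert (by
        simp only [Finset.mem_singleton, neg_inj]
        exact fun h => h1 h.symm),
      Finset.sum_singleton]
  simp only [mul_neg, neg_neg]
  rw [show zch n (-(j * a)) + (zch n (-(j * b)) + (zch n (j * b) + zch n (j * a)))
      = (zch n (j * a) + zch n (-(j * a))) + (zch n (j * b) + zch n (-(j * b))) by ring,
    zch_add_neg, zch_add_neg]
  push_cast
  ring

lemma card_filter_val (P : ℕ → Prop) [DecidablePred P] :
    (Finset.univ.filter (fun j : ZMod n => P j.val)).card
      = ((Finset.range n).filter P).card := by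
  refine Finset.card_nbij' (fun j => j.val) (fun m => (m : ZMod n)) ?_ ?_ ?_ ?_
  · intro a ha
    rw [Finset.mem_coe, Finset.mem_filter] at ha ⊢
    exact ⟨Finset.mem_range.mpr (ZMod.val_lt a), ha.2⟩
  · intro m hm
    rw [Finset.mem_coe, Finset.mem_filter] at hm ⊢
    rw [ZMod.val_natCast_of_lt (Finset.mem_range.mp hm.1)]
    exact ⟨Finset.mem_univ _, hm.2⟩
  · intro a _
    exact ZMod.natCast_zmod_val a
  · intro m hm
    exact ZMod.val_natCast_of_lt (Finset.mem_range.mp (Finset.mem_filter.mp hm).1)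

end CircGeneral

section Trig

open Real

lemma cos_ang_congr (n : ℕ) (hn : n ≠ 0) (a b : ℕ) (h : a % n = b % n) :
    Real.cos (2 * π * a / n) = Real.cos (2 * π * b / n) := by
  have hnR : (n : ℝ) ≠ 0 := Nat.cast_ne_zero.2 hn
  have key : ∀ c : ℕ, Real.cos (2 * π * c / n) = Real.cos (2 * π * ((c % n : ℕ) : ℝ) / n) := by
    intro c
    have h0 : c % n + n * (c / n) = c := Nat.mod_add_div c n
    have h2 : (c : ℝ) = ((c % n : ℕ) : ℝ) + ((c / n : ℕ) : ℝ) * n := by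
      conv_lhs => rw [← h0]
      push_cast
      ring
    have h1 : (2 * π * c / n : ℝ)
        = 2 * π * ((c % n : ℕ) : ℝ) / n + (((c / n : ℕ) : ℤ) : ℝ) * (2 * π) := by
      rw [h2, div_eq_iff hnR, add_mul, div_mul_cancel₀ _ hnR, Int.cast_natCast]
      ring
    rw [h1, Real.cos_add_int_mul_two_pi]
  rw [key a, key b, h]

lemma quad_classify (c : ℝ) (hc : -1 ≤ c) :
    (0 < 2 * (2 * c - 1) * (c + 1) ↔ 1 / 2 < c)
    ∧ (2 * (2 * c - 1) * (c + 1) < 0 ↔ (-1 < c ∧ c < 1 / 2)) := by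
  constructor
  · constructor
    · intro h
      by_contra hle
      push_neg at hle
      nlinarith
    · intro h
      nlinarith
  · constructor
    · intro h
      constructor
      · rcases lt_or_eq_of_le hc with h' | h'
        · exact h'
        · exfalso; nlinarith
      · by_contra hle
        push_neg at hle
        nlinarith
    · rintro ⟨h1, h2⟩
      nlinarith

lemma cos_classify_le (k m : ℕ) (hk : 0 < k) (hm : m ≤ k) :
    (1 / 2 < Real.cos (π * m / k) ↔ 3 * m < k)
    ∧ (Real.cos (π * m / k) = 1 / 2 ↔ 3 * m = k)
    ∧ (Real.cos (π * m / k) = -1 ↔ m = k) := by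
  have hkR : (0 : ℝ) < k := by exact_mod_cast hk
  have hmR : (m : ℝ) ≤ k := by exact_mod_cast hm
  have hpi := Real.pi_pos
  have hx0 : 0 ≤ π * m / k := by positivity
  have hxpi : π * m / k ≤ π := by
    rw [div_le_iff₀ hkR]
    nlinarith
  have mem : π * m / k ∈ Set.Icc 0 π := ⟨hx0, hxpi⟩
  have mem3 : π / 3 ∈ Set.Icc 0 π := ⟨by positivity, by nlinarith⟩
  have mempi : π ∈ Set.Icc 0 π := ⟨le_of_lt hpi, le_refl _⟩
  have hlt : π * m / k < π / 3 ↔ 3 * m < k := by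
    rw [div_lt_div_iff₀ hkR (by norm_num : (0:ℝ) < 3)]
    constructor
    · intro h
      have : 3 * (m : ℝ) < k := by nlinarith
      exact_mod_cast this
    · intro h
      have : 3 * (m : ℝ) < k := by exact_mod_cast h
      nlinarith
  have heq : π * m / k = π / 3 ↔ 3 * m = k := by
    rw [div_eq_div_iff hkR.ne' (by norm_num : (3:ℝ) ≠ 0)]
    constructor
    · intro h
      have : 3 * (m : ℝ) = k := by nlinarith
      exact_mod_cast this
    · intro h
      have : 3 * (m : ℝ) = k := by exact_mod_cast h
      nlinarith
  have heqpi : π * m / k = π ↔ m = k := by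
    rw [div_eq_iff hkR.ne']
    constructor
    · intro h
      have : (m : ℝ) = k := by nlinarith
      exact_mod_cast this
    · intro h
      have : (m : ℝ) = k := by exact_mod_cast h
      nlinarith
  refine ⟨?_, ?_, ?_⟩
  · rw [← hlt, ← Real.cos_pi_div_three]
    exact Real.strictAntiOn_cos.lt_iff_gt mem3 mem
  · rw [← heq, ← Real.cos_pi_div_three]
    exact ⟨fun h => Real.injOn_cos mem mem3 h, fun h => by rw [h]⟩
  · rw [← heqpi, ← Real.cos_pi]
    exact ⟨fun h => Real.injOn_cos mem mempi h, fun h => by rw [h]⟩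

lemma cos_classify (k m : ℕ) (hk : 0 < k) (hm : m < 2 * k) :
    (1 / 2 < Real.cos (π * m / k) ↔ (3 * m < k ∨ 5 * k < 3 * m))
    ∧ (Real.cos (π * m / k) = 1 / 2 ↔ (3 * m = k ∨ 3 * m = 5 * k))
    ∧ (Real.cos (π * m / k) = -1 ↔ m = k) := by
  rcases le_or_gt m k with hmk | hmk
  · obtain ⟨h1, h2, h3⟩ := cos_classify_le k m hk hmk
    refine ⟨?_, ?_, h3⟩
    · rw [h1]; omega
    · rw [h2]; omega
  · set m' := 2 * k - m with hm'
    have hm'k : m' ≤ k := by omega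
    have hkR : (0 : ℝ) < k := by exact_mod_cast hk
    have hcast : (m : ℝ) = 2 * k - (m' : ℝ) := by
      have : (m' : ℝ) = 2 * (k:ℝ) - m := by
        rw [hm']
        push_cast [Nat.cast_sub (by omega : m ≤ 2 * k)]
        ring
      linarith
    have hang : π * m / k = 2 * π - π * m' / k := by
      rw [hcast]
      field_simp
    have hcos : Real.cos (π * m / k) = Real.cos (π * m' / k) := by
      rw [hang, Real.cos_two_pi_sub]
    obtain ⟨h1, h2, h3⟩ := cos_classify_le k m' hk hm'k
    rw [hcos]
    refine ⟨?_, ?_, ?_⟩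
    · rw [h1]; omega
    · rw [h2]; omega
    · rw [h3]; omega

end Trig

section Counting

lemma split_parity (k : ℕ) (Q : ℕ → Prop) [DecidablePred Q] :
    ((Finset.range (2 * k)).filter Q).card
      = ((Finset.range k).filter (fun i => Q (2 * i))).card
        + ((Finset.range k).filter (fun i => Q (2 * i + 1))).card := by
  have hsplit : Finset.range (2 * k)
      = (Finset.range k).image (fun i => 2 * i) ∪ (Finset.range k).image (fun i => 2 * i + 1) := by
    ext x
    simp only [Finset.mem_range, Finset.mem_union, Finset.mem_image]
    constructor
    · intro hx
      rcases Nat.even_or_odd x with ⟨i, hi⟩ | ⟨i, hi⟩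
      · exact Or.inl ⟨i, by omega, by omega⟩
      · exact Or.inr ⟨i, by omega, by omega⟩
    · rintro (⟨i, hi, rfl⟩ | ⟨i, hi, rfl⟩) <;> omega
  rw [hsplit, Finset.filter_union, Finset.card_union_of_disjoint]
  · rw [Finset.filter_image, Finset.filter_image,
      Finset.card_image_of_injective _ (fun a b h => by omega),
      Finset.card_image_of_injective _ (fun a b h => by omega)]
  · rw [Finset.disjoint_left]
    intro a ha hb
    rw [Finset.mem_filter, Finset.mem_image] at ha hb
    obtain ⟨⟨i, _, rfl⟩, _⟩ := ha
    obtain ⟨⟨j, _, hj⟩, _⟩ := hb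
    omega

lemma count_main (k : ℕ) (hk : 6 ≤ k) :
    ((Finset.range (2 * k)).filter (fun m => 3 * m < k ∨ 5 * k < 3 * m)).card
      ≠ ((Finset.range (2 * k)).filter
          (fun m => if m % 2 = 0 then (3 * m < k ∨ 5 * k < 3 * m)
            else (k < 3 * m ∧ 3 * m < 5 * k ∧ m ≠ k))).card := by
  rw [split_parity, split_parity]
  have heven : ((Finset.range k).filter
      (fun i => if (2 * i) % 2 = 0 then (3 * (2 * i) < k ∨ 5 * k < 3 * (2 * i))
        else (k < 3 * (2 * i) ∧ 3 * (2 * i) < 5 * k ∧ 2 * i ≠ k)))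
      = ((Finset.range k).filter (fun i => 3 * (2 * i) < k ∨ 5 * k < 3 * (2 * i))) := by
    refine Finset.filter_congr fun i _ => ?_
    rw [if_pos (by omega)]
  rw [heven]
  have hL : ((Finset.range k).filter (fun i => 3 * (2 * i + 1) < k ∨ 5 * k < 3 * (2 * i + 1))).card
      = (k + 2) / 6 + (k - (5 * k + 3) / 6) := by
    rw [Finset.filter_or, Finset.card_union_of_disjoint]
    · have e1 : (Finset.range k).filter (fun i => 3 * (2 * i + 1) < k) = Finset.range ((k + 2) / 6) := by
        ext i
        simp only [Finset.mem_filter, Finset.mem_range]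
        omega
      have e2 : (Finset.range k).filter (fun i => 5 * k < 3 * (2 * i + 1)) = Finset.Ico ((5 * k + 3) / 6) k := by
        ext i
        simp only [Finset.mem_filter, Finset.mem_range, Finset.mem_Ico]
        omega
      rw [e1, e2, Finset.card_range, Nat.card_Ico]
    · rw [Finset.disjoint_left]
      intro a ha hb
      rw [Finset.mem_filter] at ha hb
      omega
  have hR : ((Finset.range k).filter
      (fun i => if (2 * i + 1) % 2 = 0 then (3 * (2 * i + 1) < k ∨ 5 * k < 3 * (2 * i + 1))
        else (k < 3 * (2 * i + 1) ∧ 3 * (2 * i + 1) < 5 * k ∧ 2 * i + 1 ≠ k))).card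
      = (5 * k + 2) / 6 - (k + 3) / 6 - k % 2 := by
    have hodd : ((Finset.range k).filter
        (fun i => if (2 * i + 1) % 2 = 0 then (3 * (2 * i + 1) < k ∨ 5 * k < 3 * (2 * i + 1))
          else (k < 3 * (2 * i + 1) ∧ 3 * (2 * i + 1) < 5 * k ∧ 2 * i + 1 ≠ k)))
        = ((Finset.range k).filter
          (fun i => k < 3 * (2 * i + 1) ∧ 3 * (2 * i + 1) < 5 * k ∧ 2 * i + 1 ≠ k)) := by
      refine Finset.filter_congr fun i _ => ?_
      rw [if_neg (by omega)]
    rw [hodd]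
    rcases Nat.mod_two_eq_zero_or_one k with hk2 | hk2
    · have e3 : ((Finset.range k).filter
          (fun i => k < 3 * (2 * i + 1) ∧ 3 * (2 * i + 1) < 5 * k ∧ 2 * i + 1 ≠ k))
          = Finset.Ico ((k + 3) / 6) ((5 * k + 2) / 6) := by
        ext i
        simp only [Finset.mem_filter, Finset.mem_range, Finset.mem_Ico]
        omega
      rw [e3, Nat.card_Ico]
      omega
    · have e3 : ((Finset.range k).filter
          (fun i => k < 3 * (2 * i + 1) ∧ 3 * (2 * i + 1) < 5 * k ∧ 2 * i + 1 ≠ k))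
          = (Finset.Ico ((k + 3) / 6) ((5 * k + 2) / 6)).erase ((k - 1) / 2) := by
        ext i
        simp only [Finset.mem_filter, Finset.mem_range, Finset.mem_Ico, Finset.mem_erase]
        omega
      rw [e3, Finset.card_erase_of_mem, Nat.card_Ico]
      · omega
      · rw [Finset.mem_Ico]
        omega
  rw [hL, hR]
  omega

end Counting

theorem stmt6 (k n : ℕ) [NeZero n] (hk : 6 ≤ k) (hn : n = 2 * k)
    (S1 S2 : Finset (ZMod n))
    (hS1 : S1 = {((1 : ℕ) : ZMod n), ((2 : ℕ) : ZMod n),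
                 ((2 * k - 2 : ℕ) : ZMod n), ((2 * k - 1 : ℕ) : ZMod n)})
    (hS2 : S2 = {((k - 2 : ℕ) : ZMod n), ((k - 1 : ℕ) : ZMod n),
                 ((k + 1 : ℕ) : ZMod n), ((k + 2 : ℕ) : ZMod n)}) :
    Multiset.card ((circSpectrum n S1).filter (fun x => 0 < x)) ≠
      Multiset.card ((circSpectrum n S2).filter (fun x => 0 < x)) := by
  subst hn
  have hpi := Real.pi_pos
  have hk0 : 0 < k := by omega
  have hn0 : (2 * k : ℕ) ≠ 0 := by omega
  have hkR : ((k : ℕ) : ℝ) ≠ 0 := Nat.cast_ne_zero.2 (by omega)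
  have hnR : (((2 * k : ℕ) : ℕ) : ℝ) ≠ 0 := Nat.cast_ne_zero.2 hn0
  -- value of casts
  have hval : ∀ a : ℕ, a < 2 * k → ((a : ZMod (2 * k))).val = a :=
    fun a ha => ZMod.val_natCast_of_lt ha
  have hneg : ∀ a b : ℕ, a + b = 2 * k → ((a : ZMod (2 * k))) = -((b : ZMod (2 * k))) := by
    intro a b hab
    refine eq_neg_of_add_eq_zero_left ?_
    rw [← Nat.cast_add, hab]
    exact ZMod.natCast_self (2 * k)
  have hnecast : ∀ a b : ℕ, a < 2 * k → b < 2 * k → a ≠ b →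
      ((a : ZMod (2 * k))) ≠ ((b : ZMod (2 * k))) := by
    intro a b ha hb hab h
    exact hab (by rw [← hval a ha, ← hval b hb, h])
  -- angle helper
  have hang : ∀ a : ℕ, (2 * Real.pi * a / ((2 * k : ℕ) : ℝ)) = Real.pi * a / k := by
    intro a
    rw [div_eq_div_iff hnR hkR]
    push_cast
    ring
  -- the eigenvalue functions
  set r1 : ZMod (2 * k) → ℝ := fun j =>
    2 * Real.cos (2 * Real.pi * ((j * ((1 : ℕ) : ZMod (2 * k))).val) / ((2 * k : ℕ) : ℝ))
      + 2 * Real.cos (2 * Real.pi * ((j * ((2 : ℕ) : ZMod (2 * k))).val) / ((2 * k : ℕ) : ℝ))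
    with hr1def
  set r2 : ZMod (2 * k) → ℝ := fun j =>
    2 * Real.cos (2 * Real.pi * ((j * ((k - 2 : ℕ) : ZMod (2 * k))).val) / ((2 * k : ℕ) : ℝ))
      + 2 * Real.cos (2 * Real.pi * ((j * ((k - 1 : ℕ) : ZMod (2 * k))).val) / ((2 * k : ℕ) : ℝ))
    with hr2def
  have hS1' : S1 = {((1 : ℕ) : ZMod (2 * k)), ((2 : ℕ) : ZMod (2 * k)),
      -((2 : ℕ) : ZMod (2 * k)), -((1 : ℕ) : ZMod (2 * k))} := by
    rw [hS1, hneg (2 * k - 2) 2 (by omega), hneg (2 * k - 1) 1 (by omega)]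
  have hS2' : S2 = {((k - 2 : ℕ) : ZMod (2 * k)), ((k - 1 : ℕ) : ZMod (2 * k)),
      -((k - 1 : ℕ) : ZMod (2 * k)), -((k - 2 : ℕ) : ZMod (2 * k))} := by
    rw [hS2, hneg (k + 1) (k - 1) (by omega), hneg (k + 2) (k - 2) (by omega)]
  have hr1 : ∀ j, muC (2 * k) S1 j = ((r1 j : ℝ) : ℂ) := by
    intro j
    refine muC_pair (2 * k) S1 _ _ hS1' ?_ ?_ ?_ ?_ j
    · exact hnecast 1 2 (by omega) (by omega) (by omega)
    · rw [← hneg (2 * k - 2) 2 (by omega)]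
      exact hnecast 1 (2 * k - 2) (by omega) (by omega) (by omega)
    · rw [← hneg (2 * k - 1) 1 (by omega)]
      exact hnecast 1 (2 * k - 1) (by omega) (by omega) (by omega)
    · rw [← hneg (2 * k - 2) 2 (by omega)]
      exact hnecast 2 (2 * k - 2) (by omega) (by omega) (by omega)
  have hr2 : ∀ j, muC (2 * k) S2 j = ((r2 j : ℝ) : ℂ) := by
    intro j
    refine muC_pair (2 * k) S2 _ _ hS2' ?_ ?_ ?_ ?_ j
    · exact hnecast (k - 2) (k - 1) (by omega) (by omega) (by omega)
    · rw [← hneg (k + 1) (k - 1) (by omega)]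
      exact hnecast (k - 2) (k + 1) (by omega) (by omega) (by omega)
    · rw [← hneg (k + 2) (k - 2) (by omega)]
      exact hnecast (k - 2) (k + 2) (by omega) (by omega) (by omega)
    · rw [← hneg (k + 1) (k - 1) (by omega)]
      exact hnecast (k - 1) (k + 1) (by omega) (by omega) (by omega)
  -- value congruences
  have hvalmul : ∀ (j : ZMod (2 * k)) (a : ℕ), a < 2 * k →
      Real.cos (2 * Real.pi * ((j * ((a : ℕ) : ZMod (2 * k))).val) / ((2 * k : ℕ) : ℝ))
        = Real.cos (2 * Real.pi * ((j.val * a : ℕ) : ℝ) / ((2 * k : ℕ) : ℝ)) := by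
    intro j a ha
    refine cos_ang_congr (2 * k) hn0 _ _ ?_
    rw [ZMod.val_mul, hval a ha, Nat.mod_mod_of_dvd _ dvd_rfl]
  have hQ1 : ∀ j : ZMod (2 * k), (0 < r1 j ↔ (3 * j.val < k ∨ 5 * k < 3 * j.val)) := by
    intro j
    set m := j.val with hm
    have hmlt : m < 2 * k := ZMod.val_lt j
    obtain ⟨hc1, hc2, hc3⟩ := cos_classify k m hk0 hmlt
    set c := Real.cos (Real.pi * m / k) with hc
    have hcm1 : -1 ≤ c := Real.neg_one_le_cos _
    obtain ⟨hq1, hq2⟩ := quad_classify c hcm1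
    have hr1j : r1 j = 2 * (2 * c - 1) * (c + 1) := by
      rw [hr1def]
      simp only
      rw [hvalmul j 1 (by omega), hvalmul j 2 (by omega), hang (m * 1), hang (m * 2),
        show (Real.pi * ((m * 1 : ℕ) : ℝ) / k) = Real.pi * m / k by push_cast; ring,
        show (Real.pi * ((m * 2 : ℕ) : ℝ) / k) = 2 * (Real.pi * m / k) by push_cast; ring,
        Real.cos_two_mul]
      rw [← hc]
      ring
    rw [hr1j, hq1, hc1]
  have hQ2 : ∀ j : ZMod (2 * k), (0 < r2 j ↔
      (if j.val % 2 = 0 then (3 * j.val < k ∨ 5 * k < 3 * j.val)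
        else (k < 3 * j.val ∧ 3 * j.val < 5 * k ∧ j.val ≠ k))) := by
    intro j
    set m := j.val with hm
    have hmlt : m < 2 * k := ZMod.val_lt j
    obtain ⟨hc1, hc2, hc3⟩ := cos_classify k m hk0 hmlt
    set c := Real.cos (Real.pi * m / k) with hc
    have hcm1 : -1 ≤ c := Real.neg_one_le_cos _
    obtain ⟨hq1, hq2⟩ := quad_classify c hcm1
    have hr2j : r2 j = (-1) ^ m * (2 * (2 * c - 1) * (c + 1)) := by
      rw [hr2def]
      simp only
      rw [hvalmul j (k - 2) (by omega), hvalmul j (k - 1) (by omega),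
        hang (m * (k - 2)), hang (m * (k - 1)),
        show (Real.pi * ((m * (k - 2) : ℕ) : ℝ) / k)
            = (m : ℝ) * Real.pi - 2 * (Real.pi * m / k) by
          push_cast [Nat.cast_sub (show 2 ≤ k by omega)]
          field_simp,
        show (Real.pi * ((m * (k - 1) : ℕ) : ℝ) / k)
            = (m : ℝ) * Real.pi - (Real.pi * m / k) by
          push_cast [Nat.cast_sub (show 1 ≤ k by omega)]
          field_simp,
        Real.cos_nat_mul_pi_sub, Real.cos_nat_mul_pi_sub, Real.cos_two_mul]
      rw [← hc]
      ring
    rcases Nat.even_or_odd m with he | ho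
    · rw [if_pos (Nat.even_iff.mp he), hr2j, Even.neg_one_pow he, one_mul, hq1, hc1]
    · rw [if_neg (by rw [Nat.odd_iff.mp ho]; omega), hr2j, Odd.neg_one_pow ho]
      rw [show (0 < -1 * (2 * (2 * c - 1) * (c + 1))) ↔ (2 * (2 * c - 1) * (c + 1) < 0) by
        constructor <;> intro h <;> nlinarith]
      rw [hq2]
      constructor
      · rintro ⟨hgt, hlt⟩
        have h1' : ¬(3 * m < k ∨ 5 * k < 3 * m) := fun h => by
          rw [← hc1] at h; linarith
        have h2' : ¬(3 * m = k ∨ 3 * m = 5 * k) := fun h => by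
          rw [← hc2] at h; linarith
        have h3' : m ≠ k := fun h => by
          rw [← hc3] at h; linarith
        omega
      · rintro ⟨h1', h2', h3'⟩
        have hne1 : c ≠ -1 := fun h => h3' (hc3.mp h)
        have hngt : ¬(1 / 2 < c) := fun h => by
          have := hc1.mp h; omega
        have hneq : c ≠ 1 / 2 := fun h => by
          have := hc2.mp h; omega
        constructor
        · exact lt_of_le_of_ne hcm1 (Ne.symm hne1)
        · exact lt_of_le_of_ne (not_lt.mp hngt) hneq
  -- assemble
  have hcount1 : Multiset.card ((circSpectrum (2 * k) S1).filter (fun x => 0 < x))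
      = ((Finset.range (2 * k)).filter (fun m => 3 * m < k ∨ 5 * k < 3 * m)).card := by
    rw [card_filter_spectrum (2 * k) S1 r1 hr1 (fun x => 0 < x)]
    rw [Finset.filter_congr (q := fun j : ZMod (2 * k) => 3 * j.val < k ∨ 5 * k < 3 * j.val)
      (fun j _ => hQ1 j)]
    exact card_filter_val (2 * k) (fun m => 3 * m < k ∨ 5 * k < 3 * m)
  have hcount2 : Multiset.card ((circSpectrum (2 * k) S2).filter (fun x => 0 < x))
      = ((Finset.range (2 * k)).filter
          (fun m => if m % 2 = 0 then (3 * m < k ∨ 5 * k < 3 * m)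
            else (k < 3 * m ∧ 3 * m < 5 * k ∧ m ≠ k))).card := by
    rw [card_filter_spectrum (2 * k) S2 r2 hr2 (fun x => 0 < x)]
    rw [Finset.filter_congr (q := fun j : ZMod (2 * k) =>
        if j.val % 2 = 0 then (3 * j.val < k ∨ 5 * k < 3 * j.val)
          else (k < 3 * j.val ∧ 3 * j.val < 5 * k ∧ j.val ≠ k)) (fun j _ => hQ2 j)]
    exact card_filter_val (2 * k) (fun m => if m % 2 = 0 then (3 * m < k ∨ 5 * k < 3 * m)
      else (k < 3 * m ∧ 3 * m < 5 * k ∧ m ≠ k))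
  rw [hcount1, hcount2]
  exact count_main k hk
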